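/- Let a countable discrete group Γ act expansively and continuously on a compact metric space (X, ρ), and let d > 0 be an expansiveness constant, i.e. whenever x, y ∈ X satisfy sup_{s∈Γ} ρ(sx, sy) ≤ d one has x = y. If x, y ∈ X satisfy ρ(sx, sy) ≤ d for all but finitely many s ∈ Γ, then (x, y) is an asymptotic pair: ρ(sx, sy) → 0 along the cofinite filter on Γ. -/

import Mathlib

/-!
STATEMENT 11: For an expansive continuous action on a compact metric space with
expansiveness constant `d`, pairs that are eventually `d`-close along the cofinite
filter are asymptotic.
-/

open Filter Topology

theorem stmt11 {Γ : Type*} [Group Γ] [Countable Γ]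
    {X : Type*} [MetricSpace X] [CompactSpace X]
    [MulAction Γ X] (hcont : ∀ s : Γ, Continuous fun x : X => s • x)
    (d : ℝ) (hd : 0 < d)
    -- `d` is an expansiveness constant
    (hexp : ∀ x y : X, (∀ s : Γ, dist (s • x) (s • y) ≤ d) → x = y)
    (x y : X)
    -- `dist (s • x) (s • y) ≤ d` for all but finitely many `s ∈ Γ`
    (h : ∀ᶠ s : Γ in cofinite, dist (s • x) (s • y) ≤ d) :
    -- `(x, y)` is an asymptotic pair
    Tendsto (fun s : Γ => dist (s • x) (s • y)) cofinite (𝓝 0) := by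
  by_contra hT
  rw [Metric.tendsto_nhds] at hT
  push_neg at hT
  obtain ⟨ε, hε, hfreq⟩ := hT
  replace hfreq : ¬ {s : Γ | ¬ dist (dist (s • x) (s • y)) 0 < ε}.Finite := by
    rw [← Filter.eventually_cofinite, Filter.not_eventually]; simpa only [not_lt] using hfreq
  -- the set of `s` with `dist (s•x) (s•y) ≥ ε` is infinite
  have hinf : {s : Γ | ¬ dist (dist (s • x) (s • y)) 0 < ε}.Infinite :=
    fun hfin => hfreq hfin
  set S := {s : Γ | ¬ dist (dist (s • x) (s • y)) 0 < ε} with hS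
  let e := hinf.natEmbedding
  let u : ℕ → Γ := fun n => (e n : Γ)
  have hu_inj : Function.Injective u := fun a b hab => by
    have := e.injective (Subtype.ext hab); exact this
  have hu_mem : ∀ n, ε ≤ dist (u n • x) (u n • y) := by
    intro n
    have h1 : ¬ dist (dist (u n • x) (u n • y)) 0 < ε := (e n).2
    have h0 : (0:ℝ) ≤ dist (u n • x) (u n • y) := dist_nonneg
    rw [Real.dist_eq, sub_zero, abs_of_nonneg h0] at h1
    linarith [not_lt.mp h1]
  -- extract convergent subsequences
  obtain ⟨x', φ, hφ, hx'⟩ := CompactSpace.tendsto_subseq (fun n => u n • x)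
  obtain ⟨y', ψ, hψ, hy'⟩ := CompactSpace.tendsto_subseq (fun n => u (φ n) • y)
  let w : ℕ → Γ := fun n => u (φ (ψ n))
  have hw_inj : Function.Injective w :=
    hu_inj.comp (hφ.injective.comp hψ.injective)
  have hwx : Tendsto (fun n => w n • x) atTop (𝓝 x') := by
    have := hx'.comp hψ.tendsto_atTop
    exact this
  have hwy : Tendsto (fun n => w n • y) atTop (𝓝 y') := hy'
  -- dist x' y' ≥ ε
  have hdist : ε ≤ dist x' y' := by
    have htend : Tendsto (fun n => dist (w n • x) (w n • y)) atTop (𝓝 (dist x' y')) :=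
      hwx.dist hwy
    exact ge_of_tendsto htend (Eventually.of_forall fun n => hu_mem _)
  -- for every t, dist (t•x') (t•y') ≤ d
  have hall : ∀ t : Γ, dist (t • x') (t • y') ≤ d := by
    intro t
    have hv_inj : Function.Injective (fun n => t * w n) :=
      (mul_right_injective t).comp hw_inj
    have hev : ∀ᶠ n in atTop, dist ((t * w n) • x) ((t * w n) • y) ≤ d := by
      rw [← Nat.cofinite_eq_atTop]
      exact hv_inj.tendsto_cofinite.eventually h
    have htx : Tendsto (fun n => (t * w n) • x) atTop (𝓝 (t • x')) := by
      simp only [mul_smul]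
      exact ((hcont t).continuousAt.tendsto).comp hwx
    have hty : Tendsto (fun n => (t * w n) • y) atTop (𝓝 (t • y')) := by
      simp only [mul_smul]
      exact ((hcont t).continuousAt.tendsto).comp hwy
    exact le_of_tendsto (htx.dist hty) hev
  have : x' = y' := hexp x' y' hall
  rw [this] at hdist
  simp at hdist
  linarith
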